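/- arXiv:2207.14492 — 3 statements merged into one kernel-verified Lean document; each statement's English description precedes it below -/
import Mathlib

section
/- Let p be a rational prime, K a number field, α ∈ K, β ∈ K^×, U ∈ ℤ_(p), and 𝔭 a prime ideal of O_K above p. Suppose ord_𝔭(β·(U+α)) > ord_𝔭(β) + min{0, ord_𝔭(α)}, and let u ∈ {0,...,p-1} be the unique integer with u ≡ -α (mod 𝔭). Then U = p·U′ + u for some U′ ∈ ℤ_(p). -/
open NumberField IsDedekindDomain

/-- Let `p` be a rational prime, `K` a number field, `α ∈ K`, `β ∈ K^×`, `U ∈ ℤ_(p)`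
and `𝔭` a prime of `𝓞 K` above `p`. Suppose `ord_𝔭(β(U+α)) > ord_𝔭(β) + min{0, ord_𝔭(α)}`
(stated multiplicatively), and let `u ∈ {0,…,p-1}` satisfy `u ≡ -α (mod 𝔭)`.
Then `U = p·U′ + u` for some `U′ ∈ ℤ_(p)`. -/
theorem U_eq_pU_add_u (K : Type*) [Field K] [NumberField K]
    (p : ℕ) (hp : p.Prime) (α β : K) (hβ : β ≠ 0) (U : ℚ) (hU : ¬ p ∣ U.den)
    (v : HeightOneSpectrum (𝓞 K)) (hv : (p : 𝓞 K) ∈ v.asIdeal)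
    (h : v.valuation K (β * (algebraMap ℚ K U + α)) <
        v.valuation K β * max 1 (v.valuation K α))
    (u : ℕ) (hu : u < p) (huα : v.valuation K ((u : K) + α) < 1) :
    ∃ U' : ℚ, ¬ p ∣ U'.den ∧ U = p * U' + u := by
  -- valuation of integer casts
  have hint_le : ∀ n : ℤ, v.valuation K ((n : K)) ≤ 1 := by
    intro n
    have h1 : algebraMap (𝓞 K) K (n : 𝓞 K) = (n : K) := by
      exact_mod_cast map_intCast (algebraMap (𝓞 K) K) n
    rw [← h1, v.valuation_of_algebraMap]
    exact v.intValuation_le_one _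
  have key_int : ∀ n : ℤ, ¬ (p : ℤ) ∣ n → v.valuation K ((n : K)) = 1 := by
    intro n hn
    have h1 : algebraMap (𝓞 K) K (n : 𝓞 K) = (n : K) := by
      exact_mod_cast map_intCast (algebraMap (𝓞 K) K) n
    rw [← h1, v.valuation_of_algebraMap]
    refine le_antisymm (v.intValuation_le_one _) ?_
    by_contra hlt
    push_neg at hlt
    have hdvd := (v.intValuation_lt_one_iff_dvd (n : 𝓞 K)).mp hlt
    have hmem : (n : 𝓞 K) ∈ v.asIdeal := by
      have := Ideal.le_of_dvd hdvd
      exact this (Ideal.mem_span_singleton_self _)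
    -- coprimality
    have hcop : IsCoprime (p : ℤ) n := by
      rw [Int.isCoprime_iff_gcd_eq_one]
      exact Nat.Coprime.gcd_eq_one ((Nat.Prime.coprime_iff_not_dvd hp).mpr
        (fun hd => hn (Int.natCast_dvd.mpr hd)))
    obtain ⟨a, b, hab⟩ := hcop
    have : (1 : 𝓞 K) ∈ v.asIdeal := by
      have := congrArg (fun z : ℤ => (z : 𝓞 K)) hab
      push_cast at this
      rw [← this]
      exact Ideal.add_mem _ (Ideal.mul_mem_left _ _ hv) (Ideal.mul_mem_left _ _ hmem)
    exact v.isPrime.ne_top (Ideal.eq_top_of_isUnit_mem _ this isUnit_one)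
  have val_rat : ∀ q : ℚ, ¬ p ∣ q.den →
      v.valuation K (algebraMap ℚ K q) = v.valuation K ((q.num : K)) := by
    intro q hq
    have hden : v.valuation K (((q.den : ℤ) : K)) = 1 := by
      refine key_int _ (fun hd => hq ?_)
      exact_mod_cast hd
    rw [eq_ratCast, Rat.cast_def, map_div₀]
    push_cast at hden ⊢
    rw [hden, div_one]
  -- v(U) ≤ 1
  have hUle : v.valuation K (algebraMap ℚ K U) ≤ 1 := by
    rw [val_rat U hU]; exact hint_le _
  -- cancel v β
  rw [map_mul] at h
  have hlt : v.valuation K (algebraMap ℚ K U + α) < max 1 (v.valuation K α) :=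
    lt_of_mul_lt_mul_left h zero_le'
  have hUαlt : v.valuation K (algebraMap ℚ K U + α) < 1 := by
    rcases le_or_gt (v.valuation K α) 1 with hα | hα
    · rwa [max_eq_left hα] at hlt
    · exfalso
      rw [max_eq_right hα.le] at hlt
      have hne : v.valuation K (algebraMap ℚ K U) ≠ v.valuation K α :=
        (lt_of_le_of_lt hUle hα).ne
      have := Valuation.map_add_of_distinct_val (v.valuation K) hne
      rw [this, max_eq_right (lt_of_le_of_lt hUle hα).le] at hlt
      exact lt_irrefl _ hlt
  -- v(U - u) < 1
  have hsub : v.valuation K (algebraMap ℚ K (U - (u : ℚ))) < 1 := by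
    have heq : algebraMap ℚ K (U - (u : ℚ)) =
        (algebraMap ℚ K U + α) - ((u : K) + α) := by
      rw [map_sub]
      push_cast
      ring
    rw [heq]
    exact lt_of_le_of_lt (Valuation.map_sub _ _ _) (max_lt hUαlt huα)
  set q : ℚ := U - (u : ℚ) with hq
  have hqden : ¬ p ∣ q.den := by
    intro hd
    have h1 : q.den ∣ U.den * (((-(u : ℤ) : ℤ)) : ℚ).den := by
      have he : q = U + (((-(u : ℤ) : ℤ)) : ℚ) := by push_cast; ring
      rw [he]
      exact Rat.add_den_dvd _ _
    rw [Rat.den_intCast, mul_one] at h1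
    exact hU (hd.trans h1)
  have hqnum : (p : ℤ) ∣ q.num := by
    by_contra hn
    rcases eq_or_ne q 0 with h0 | h0
    · exact hn (by simp [h0])
    · have := val_rat q hqden
      rw [key_int _ hn] at this
      rw [this] at hsub
      exact lt_irrefl _ hsub
  obtain ⟨k, hk⟩ := hqnum
  refine ⟨(k : ℚ) / ((q.den : ℤ) : ℚ), ?_, ?_⟩
  · intro hd
    apply hqden
    have h1 : (((k : ℚ) / ((q.den : ℤ) : ℚ)).den : ℤ) ∣ (q.den : ℤ) := by
      rw [← Rat.divInt_eq_div]
      exact Rat.den_dvd _ _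
    exact_mod_cast (Int.natCast_dvd_natCast.mpr hd).trans h1
  · have hden0 : ((q.den : ℤ) : ℚ) ≠ 0 := by
      exact_mod_cast q.den_ne_zero
    have h2 : (p : ℚ) * ((k : ℚ) / ((q.den : ℤ) : ℚ)) = q := by
      rw [mul_div_assoc', div_eq_iff hden0, eq_comm]
      have hmul : ∀ r : ℚ, r * ((r.den : ℕ) : ℚ) = (r.num : ℚ) := by
        intro r
        nth_rewrite 1 [← Rat.num_div_den r]
        exact div_mul_cancel₀ (r.num : ℚ)
          (show ((r.den : ℚ)) ≠ 0 from Nat.cast_ne_zero.mpr r.den_ne_zero)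
      calc q * ((q.den : ℤ) : ℚ) = (q.num : ℚ) := by push_cast; exact hmul q
        _ = (p : ℚ) * (k : ℚ) := by rw [hk]; push_cast; ring
    have h3 : U = q + u := by rw [hq]; ring
    rw [h3, h2]
end

section
/- Let K be a number field, p a rational prime, and γ ∈ K a generator of K (i.e. K = ℚ(γ)). Then there exists a bound B such that for any U ∈ ℤ_(p) and any prime ideal 𝔭 of O_K over p with e(𝔭|p) ≠ 1 or f(𝔭|p) ≠ 1, one has ord_𝔭(U + γ) ≤ B. -/
set_option linter.unusedSectionVars false
open NumberField IsDedekindDomain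
open Multiplicative

namespace BVRI

variable {K : Type*} [Field K] [NumberField K] {p : ℕ}

section Fixedv

variable (hp : p.Prime) (v : HeightOneSpectrum (𝓞 K)) (hpv : (p : 𝓞 K) ∈ v.asIdeal)

/-- membership in terms of valuation -/
lemma val_lt_one_iff (z : 𝓞 K) :
    v.valuation K (algebraMap (𝓞 K) K z) < 1 ↔ z ∈ v.asIdeal := by
  rw [v.valuation_lt_one_iff_dvd, Ideal.dvd_span_singleton]

include hp hpv in
lemma comap_eq : Ideal.comap (algebraMap ℤ (𝓞 K)) v.asIdeal = Ideal.span {(p : ℤ)} := by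
  have hmax : (Ideal.span {(p : ℤ)}).IsMaximal := by
    refine PrincipalIdealRing.isMaximal_of_irreducible ?_
    exact (Int.prime_iff_natAbs_prime.mpr (by simpa using hp)).irreducible
  have hle : Ideal.span {(p : ℤ)} ≤ Ideal.comap (algebraMap ℤ (𝓞 K)) v.asIdeal := by
    rw [Ideal.span_le, Set.singleton_subset_iff]
    simpa using hpv
  haveI : v.asIdeal.IsPrime := v.isPrime
  exact (hmax.eq_of_le (Ideal.comap_ne_top _ v.isPrime.ne_top) hle).symm

include hp hpv in
lemma int_not_mem {m : ℤ} (h : ¬ (p : ℤ) ∣ m) : (m : 𝓞 K) ∉ v.asIdeal := by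
  intro hm
  apply h
  rw [← Ideal.mem_span_singleton, ← comap_eq hp v hpv]
  simpa using hm

lemma val_intCast_le_one (m : ℤ) : v.valuation K ((m : K)) ≤ 1 := by
  rw [← map_intCast (algebraMap (𝓞 K) K) m]
  exact v.valuation_le_one _

include hp hpv in
lemma val_intCast_eq_one {m : ℤ} (h : ¬ (p : ℤ) ∣ m) : v.valuation K ((m : K)) = 1 := by
  refine le_antisymm (val_intCast_le_one v m) ?_
  by_contra hlt
  rw [not_le] at hlt
  rw [← map_intCast (algebraMap (𝓞 K) K) m, val_lt_one_iff] at hlt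
  exact int_not_mem hp v hpv h hlt

include hpv in
lemma val_intCast_lt_one {m : ℤ} (h : (p : ℤ) ∣ m) : v.valuation K ((m : K)) < 1 := by
  rw [← map_intCast (algebraMap (𝓞 K) K) m, val_lt_one_iff]
  obtain ⟨c, rfl⟩ := h
  push_cast
  exact Ideal.mul_mem_right _ _ hpv

include hp in
lemma num_not_dvd {q : ℚ} (h : p ∣ q.den) : ¬ (p : ℤ) ∣ q.num := by
  intro hnum
  have h1 : p ∣ q.num.natAbs := by
    have := Int.natAbs_dvd_natAbs.mpr hnum
    simpa using this
  have h2 : p ∣ Nat.gcd q.num.natAbs q.den := Nat.dvd_gcd h1 h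
  rw [Nat.Coprime.gcd_eq_one q.reduced] at h2
  exact hp.one_lt.ne' (Nat.dvd_one.mp h2)

lemma ratCast_eq (q : ℚ) : algebraMap ℚ K q = (q.num : K) / (q.den : K) := by
  rw [eq_ratCast (algebraMap ℚ K) q, Rat.cast_def]

lemma val_den_eq_one (hp : p.Prime) (hpv : (p : 𝓞 K) ∈ v.asIdeal) {q : ℚ} (h : ¬ p ∣ q.den) :
    v.valuation K ((q.den : K)) = 1 := by
  have := val_intCast_eq_one hp v hpv (m := (q.den : ℤ)) (by exact_mod_cast h)
  simpa using this

include hp hpv in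
lemma val_rat_le_one {q : ℚ} (h : ¬ p ∣ q.den) : v.valuation K (algebraMap ℚ K q) ≤ 1 := by
  rw [ratCast_eq, map_div₀, val_den_eq_one v hp hpv h, div_one]
  exact val_intCast_le_one v q.num

include hp hpv in
lemma not_dvd_den_of_val_le_one {q : ℚ} (h : v.valuation K (algebraMap ℚ K q) ≤ 1) :
    ¬ p ∣ q.den := by
  intro hden
  have hnum : v.valuation K ((q.num : K)) = 1 :=
    val_intCast_eq_one hp v hpv (num_not_dvd hp hden)
  have hden' : v.valuation K ((q.den : K)) < 1 := by
    have := val_intCast_lt_one v hpv (m := (q.den : ℤ)) (by exact_mod_cast hden)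
    simpa using this
  have hd0 : v.valuation K ((q.den : K)) ≠ 0 := by
    simp only [ne_eq, map_eq_zero]
    exact_mod_cast q.den_nz
  have key : v.valuation K (algebraMap ℚ K q) * v.valuation K ((q.den : K)) = 1 := by
    rw [ratCast_eq, map_div₀, div_mul_cancel₀ _ hd0, hnum]
  have : (1 : WithZero (Multiplicative ℤ)) ≤ v.valuation K ((q.den : K)) :=
    calc (1 : WithZero (Multiplicative ℤ)) = _ := key.symm
    _ ≤ 1 * v.valuation K ((q.den : K)) := mul_le_mul_left h _
    _ = v.valuation K ((q.den : K)) := one_mul _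
  exact absurd this (not_le.mpr hden')

include hp hpv in
lemma exists_int_close {q : ℚ} (h : ¬ p ∣ q.den) :
    ∃ m : ℤ, v.valuation K (algebraMap ℚ K q - (m : K)) < 1 := by
  haveI : Fact p.Prime := ⟨hp⟩
  have hb0 : ((q.den : ZMod p)) ≠ 0 := by
    rw [Ne, ZMod.natCast_eq_zero_iff]
    exact h
  set b' : ℤ := (((q.den : ZMod p))⁻¹.val : ℤ) with hb'
  have hdvd : (p : ℤ) ∣ (q.den : ℤ) * b' - 1 := by
    have h0 : (((q.den : ℤ) * b' - 1 : ℤ) : ZMod p) = 0 := by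
      push_cast [hb']
      rw [ZMod.natCast_val, ZMod.cast_id, mul_inv_cancel₀ hb0]
      ring
    exact (ZMod.intCast_zmod_eq_zero_iff_dvd _ _).mp h0
  refine ⟨q.num * b', ?_⟩
  have hden0 : ((q.den : K)) ≠ 0 := by
    exact_mod_cast (Nat.cast_ne_zero (R := K)).mpr q.den_nz
  have key : algebraMap ℚ K q - ((q.num * b' : ℤ) : K) =
      ((q.num * (1 - (q.den : ℤ) * b') : ℤ) : K) / ((q.den : K)) := by
    rw [ratCast_eq]
    field_simp
    push_cast
    ring
  rw [key, map_div₀, val_den_eq_one v hp hpv h, div_one]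
  apply val_intCast_lt_one v hpv
  refine Dvd.dvd.mul_left ?_ _
  simpa using hdvd.neg_right

/-- every element of K has some valuation upper bound of the form ofAdd k -/
lemma exists_nat_bound (z : K) :
    ∃ k : ℕ, v.valuation K z ≤ ((ofAdd (k : ℤ) : Multiplicative ℤ) : WithZero (Multiplicative ℤ)) := by
  by_cases hz : v.valuation K z = 0
  · exact ⟨0, by simp [hz]⟩
  · obtain ⟨u, hu⟩ := WithZero.ne_zero_iff_exists.mp hz
    refine ⟨u.toAdd.toNat, ?_⟩
    rw [← hu, WithZero.coe_le_coe, ← ofAdd_toAdd u, ofAdd_le]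
    exact Int.self_le_toNat _

lemma one_le_ofAdd_nat (k : ℕ) :
    (1 : WithZero (Multiplicative ℤ)) ≤ ((ofAdd (k : ℤ) : Multiplicative ℤ) : WithZero (Multiplicative ℤ)) := by
  rw [← WithZero.coe_one, WithZero.coe_le_coe, ← ofAdd_zero, ofAdd_le]
  exact_mod_cast Nat.zero_le k

lemma pow_sub_bound (γ β : K) (hβ : v.valuation K β ≤ 1) {k : ℕ}
    (hkγ : v.valuation K γ ≤ ((ofAdd (k : ℤ) : Multiplicative ℤ) : WithZero (Multiplicative ℤ))) :
    ∀ i : ℕ, v.valuation K (γ ^ i - β ^ i) ≤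
      ((ofAdd (k : ℤ) : Multiplicative ℤ) : WithZero (Multiplicative ℤ)) ^ i * v.valuation K (γ - β) := by
  intro i
  induction i with
  | zero => simp
  | succ i ih =>
    have hsplit : γ ^ (i + 1) - β ^ (i + 1) = γ ^ i * (γ - β) + β * (γ ^ i - β ^ i) := by ring
    rw [hsplit]
    refine le_trans ((v.valuation K).map_add _ _) (max_le ?_ ?_)
    · rw [Valuation.map_mul, Valuation.map_pow]
      calc v.valuation K γ ^ i * v.valuation K (γ - β)
          ≤ ((ofAdd (k : ℤ) : Multiplicative ℤ) : WithZero (Multiplicative ℤ)) ^ i * v.valuation K (γ - β) :=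
            mul_le_mul_left (pow_le_pow_left' hkγ i) _
        _ ≤ _ := mul_le_mul_left (pow_le_pow_right' (one_le_ofAdd_nat k) (Nat.le_succ i)) _
    · rw [Valuation.map_mul]
      calc v.valuation K β * v.valuation K (γ ^ i - β ^ i)
          ≤ 1 * (((ofAdd (k : ℤ) : Multiplicative ℤ) : WithZero (Multiplicative ℤ)) ^ i * v.valuation K (γ - β)) :=
            mul_le_mul' hβ ih
        _ = ((ofAdd (k : ℤ) : Multiplicative ℤ) : WithZero (Multiplicative ℤ)) ^ i * v.valuation K (γ - β) := one_mul _
        _ ≤ _ := mul_le_mul_left (pow_le_pow_right' (one_le_ofAdd_nat k) (Nat.le_succ i)) _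

lemma poly_bound (γ β : K) (hβ : v.valuation K β ≤ 1) (P : Polynomial ℚ) {k : ℕ}
    (hkγ : v.valuation K γ ≤ ((ofAdd (k : ℤ) : Multiplicative ℤ) : WithZero (Multiplicative ℤ)))
    (hkc : ∀ i, v.valuation K (algebraMap ℚ K (P.coeff i)) ≤
      ((ofAdd (k : ℤ) : Multiplicative ℤ) : WithZero (Multiplicative ℤ))) :
    v.valuation K (Polynomial.aeval γ P - Polynomial.aeval β P) ≤
      ((ofAdd (k : ℤ) : Multiplicative ℤ) : WithZero (Multiplicative ℤ)) ^ (P.natDegree + 1) *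
        v.valuation K (γ - β) := by
  set C : WithZero (Multiplicative ℤ) := ((ofAdd (k : ℤ) : Multiplicative ℤ) : WithZero (Multiplicative ℤ)) with hC
  set d := P.natDegree with hd
  have hsum : Polynomial.aeval γ P - Polynomial.aeval β P =
      ∑ i ∈ Finset.range (d + 1), P.coeff i • (γ ^ i - β ^ i) := by
    rw [Polynomial.aeval_eq_sum_range, Polynomial.aeval_eq_sum_range, ← Finset.sum_sub_distrib]
    exact Finset.sum_congr rfl fun i _ => (smul_sub _ _ _).symm
  rw [hsum]
  refine Valuation.map_sum_le _ fun i hi => ?_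
  rw [Algebra.smul_def, Valuation.map_mul]
  have hi' : i ≤ d := Nat.lt_succ_iff.mp (Finset.mem_range.mp hi)
  calc v.valuation K (algebraMap ℚ K (P.coeff i)) * v.valuation K (γ ^ i - β ^ i)
      ≤ C * (C ^ i * v.valuation K (γ - β)) := mul_le_mul' (hkc i) (pow_sub_bound v γ β hβ hkγ i)
    _ = C ^ (i + 1) * v.valuation K (γ - β) := by rw [← mul_assoc, ← pow_succ']
    _ ≤ C ^ (d + 1) * v.valuation K (γ - β) :=
        mul_le_mul_left (pow_le_pow_right' (one_le_ofAdd_nat k) (Nat.succ_le_succ hi')) _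

include hp hpv in
lemma approx (γ : K) (hγ : IntermediateField.adjoin ℚ {γ} = ⊤)
    (H : ∀ n : ℕ, ∃ U : ℚ, ¬ p ∣ U.den ∧
      v.valuation K (algebraMap ℚ K U + γ) <
        ((ofAdd (-(n : ℤ)) : Multiplicative ℤ) : WithZero (Multiplicative ℤ)))
    (x : K) (t : ℤ) :
    ∃ q : ℚ, v.valuation K (x - algebraMap ℚ K q) <
      ((ofAdd t : Multiplicative ℤ) : WithZero (Multiplicative ℤ)) := by
  -- x is a polynomial in γ
  have hint : IsIntegral ℚ γ := IsIntegral.of_finite ℚ γ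
  have hx : x ∈ IntermediateField.adjoin ℚ ({γ} : Set K) := by
    rw [hγ]; exact IntermediateField.mem_top
  have hsub : x ∈ Algebra.adjoin ℚ ({γ} : Set K) := by
    rw [← IntermediateField.adjoin_simple_toSubalgebra_of_isAlgebraic hint.isAlgebraic]
    exact hx
  rw [Algebra.adjoin_singleton_eq_range_aeval] at hsub
  obtain ⟨P, hP⟩ := (AlgHom.mem_range _).mp hsub
  set d := P.natDegree with hd
  -- a uniform bound for the coefficients and γ
  let kf : ℕ → ℕ := fun i => (exists_nat_bound v (algebraMap ℚ K (P.coeff i))).choose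
  let k : ℕ := max (exists_nat_bound v γ).choose ((Finset.range (d + 1)).sup kf)
  have hmono : ∀ {a b : ℕ}, a ≤ b →
      ((ofAdd (a : ℤ) : Multiplicative ℤ) : WithZero (Multiplicative ℤ)) ≤
        ((ofAdd (b : ℤ) : Multiplicative ℤ) : WithZero (Multiplicative ℤ)) := by
    intro a b hab
    rw [WithZero.coe_le_coe, ofAdd_le]
    exact_mod_cast hab
  have hkγ : v.valuation K γ ≤ ((ofAdd (k : ℤ) : Multiplicative ℤ) : WithZero (Multiplicative ℤ)) :=
    le_trans (exists_nat_bound v γ).choose_spec (hmono (le_max_left _ _))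
  have hkc : ∀ i, v.valuation K (algebraMap ℚ K (P.coeff i)) ≤
      ((ofAdd (k : ℤ) : Multiplicative ℤ) : WithZero (Multiplicative ℤ)) := by
    intro i
    by_cases hi : i < d + 1
    · refine le_trans (exists_nat_bound v (algebraMap ℚ K (P.coeff i))).choose_spec
        (hmono (le_trans ?_ (le_max_right _ _)))
      exact Finset.le_sup (f := kf) (Finset.mem_range.mpr hi)
    · have : P.coeff i = 0 := P.coeff_eq_zero_of_natDegree_lt (by omega)
      rw [this]
      simp only [map_zero]
      exact zero_le'
  -- choose a good U
  set c : ℤ := (((d + 1) * k : ℕ) : ℤ) with hc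
  obtain ⟨U, hUden, hUval⟩ := H (c - t).toNat
  set β : K := algebraMap ℚ K (-U) with hβdef
  have hβ : v.valuation K β ≤ 1 := by
    rw [hβdef]
    refine val_rat_le_one hp v hpv ?_
    rw [Rat.neg_den]
    exact hUden
  have hγβ : γ - β = algebraMap ℚ K U + γ := by
    rw [hβdef, map_neg]
    ring
  refine ⟨P.eval (-U), ?_⟩
  have hq : algebraMap ℚ K (P.eval (-U)) = Polynomial.aeval β P := by
    rw [hβdef, Polynomial.aeval_algebraMap_apply]
    rw [Polynomial.coe_aeval_eq_eval]
  have hbound := poly_bound v γ β hβ P hkγ hkc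
  rw [hP, ← hq, hγβ] at hbound
  refine lt_of_le_of_lt hbound ?_
  have hC : (((ofAdd (k : ℤ) : Multiplicative ℤ) : WithZero (Multiplicative ℤ)) ^ (d + 1) : WithZero (Multiplicative ℤ)) =
      ((ofAdd c : Multiplicative ℤ) : WithZero (Multiplicative ℤ)) := by
    rw [← WithZero.coe_pow, WithZero.coe_inj, ← ofAdd_nsmul, hc]
    congr 1
  rw [hC]
  calc ((ofAdd c : Multiplicative ℤ) : WithZero (Multiplicative ℤ)) * v.valuation K (algebraMap ℚ K U + γ)
      < ((ofAdd c : Multiplicative ℤ) : WithZero (Multiplicative ℤ)) *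
          ((ofAdd (-((c - t).toNat : ℤ)) : Multiplicative ℤ) : WithZero (Multiplicative ℤ)) :=
        mul_lt_mul_of_pos_left hUval (zero_lt_iff.mpr WithZero.coe_ne_zero)
    _ ≤ ((ofAdd t : Multiplicative ℤ) : WithZero (Multiplicative ℤ)) := by
        rw [← WithZero.coe_mul, WithZero.coe_le_coe, ← ofAdd_add, ofAdd_le]
        have := Int.self_le_toNat (c - t)
        omega

include hp hpv in
lemma p_not_mem_sq (γ : K) (hγ : IntermediateField.adjoin ℚ {γ} = ⊤)
    (H : ∀ n : ℕ, ∃ U : ℚ, ¬ p ∣ U.den ∧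
      v.valuation K (algebraMap ℚ K U + γ) <
        ((ofAdd (-(n : ℤ)) : Multiplicative ℤ) : WithZero (Multiplicative ℤ))) :
    (p : 𝓞 K) ∉ v.asIdeal ^ 2 := by
  intro hp2
  obtain ⟨π, hπ⟩ := v.intValuation_exists_uniformizer
  have hπK : v.valuation K (algebraMap (𝓞 K) K π) =
      ((ofAdd (-1 : ℤ) : Multiplicative ℤ) : WithZero (Multiplicative ℤ)) := by
    rw [v.valuation_of_algebraMap]
    exact hπ
  obtain ⟨q, hq⟩ := approx hp v hpv γ hγ H (algebraMap (𝓞 K) K π) (-1)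
  rw [← hπK] at hq
  have hqval : v.valuation K (algebraMap ℚ K q) = v.valuation K (algebraMap (𝓞 K) K π) := by
    have h2 := Valuation.map_sub_eq_of_lt_left (v.valuation K) hq
    rw [sub_sub_cancel] at h2
    exact h2
  rw [hπK] at hqval
  have hqle : v.valuation K (algebraMap ℚ K q) ≤ 1 := by
    rw [hqval, ← WithZero.coe_one, WithZero.coe_le_coe, ← ofAdd_zero, ofAdd_le]
    omega
  have hden := not_dvd_den_of_val_le_one hp v hpv hqle
  have hnum : v.valuation K ((q.num : K)) =
      ((ofAdd (-1 : ℤ) : Multiplicative ℤ) : WithZero (Multiplicative ℤ)) := by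
    rw [ratCast_eq, map_div₀, val_den_eq_one v hp hpv hden, div_one] at hqval
    exact hqval
  by_cases hdvd : (p : ℤ) ∣ q.num
  · obtain ⟨m, hm⟩ := hdvd
    have hple : v.valuation K ((p : K)) ≤
        ((ofAdd (-(2 : ℤ)) : Multiplicative ℤ) : WithZero (Multiplicative ℤ)) := by
      have h2 : v.asIdeal ^ 2 ∣ Ideal.span {(p : 𝓞 K)} :=
        Ideal.dvd_span_singleton.mpr hp2
      have h3 := (v.intValuation_le_pow_iff_dvd (p : 𝓞 K) 2).mpr h2
      rw [← map_natCast (algebraMap (𝓞 K) K) p, v.valuation_of_algebraMap]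
      exact_mod_cast h3
    have : v.valuation K ((q.num : K)) ≤
        ((ofAdd (-(2 : ℤ)) : Multiplicative ℤ) : WithZero (Multiplicative ℤ)) := by
      rw [hm]
      push_cast
      rw [Valuation.map_mul]
      calc v.valuation K ((p : K)) * v.valuation K ((m : K))
          ≤ ((ofAdd (-(2 : ℤ)) : Multiplicative ℤ) : WithZero (Multiplicative ℤ)) * 1 :=
            mul_le_mul' hple (val_intCast_le_one v m)
        _ = _ := mul_one _
    rw [hnum, WithZero.coe_le_coe, ofAdd_le] at this
    omega
  · have := val_intCast_eq_one hp v hpv hdvd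
    rw [hnum] at this
    rw [← WithZero.coe_one, WithZero.coe_inj] at this
    have := congrArg Multiplicative.toAdd this
    simp at this

include hp hpv in
lemma exists_int_congr (γ : K) (hγ : IntermediateField.adjoin ℚ {γ} = ⊤)
    (H : ∀ n : ℕ, ∃ U : ℚ, ¬ p ∣ U.den ∧
      v.valuation K (algebraMap ℚ K U + γ) <
        ((ofAdd (-(n : ℤ)) : Multiplicative ℤ) : WithZero (Multiplicative ℤ)))
    (x : 𝓞 K) : ∃ m : ℤ, x - (m : 𝓞 K) ∈ v.asIdeal := by
  obtain ⟨q, hq⟩ := approx hp v hpv γ hγ H (algebraMap (𝓞 K) K x) 0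
  have hq1 : v.valuation K (algebraMap (𝓞 K) K x - algebraMap ℚ K q) < 1 := by
    simpa using hq
  have hqle : v.valuation K (algebraMap ℚ K q) ≤ 1 := by
    have h2 := Valuation.map_sub (v.valuation K) (algebraMap (𝓞 K) K x)
      (algebraMap (𝓞 K) K x - algebraMap ℚ K q)
    rw [sub_sub_cancel] at h2
    exact le_trans h2 (max_le (v.valuation_le_one x) hq1.le)
  have hden := not_dvd_den_of_val_le_one hp v hpv hqle
  obtain ⟨m, hm⟩ := exists_int_close hp v hpv hden
  refine ⟨m, ?_⟩
  rw [← val_lt_one_iff]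
  have hsplit : algebraMap (𝓞 K) K (x - (m : 𝓞 K)) =
      (algebraMap (𝓞 K) K x - algebraMap ℚ K q) + (algebraMap ℚ K q - (m : K)) := by
    rw [map_sub, map_intCast]
    ring
  rw [hsplit]
  exact lt_of_le_of_lt ((v.valuation K).map_add _ _) (max_lt hq1 hm)

include hp hpv in
lemma ram_eq_one (hnot2 : (p : 𝓞 K) ∉ v.asIdeal ^ 2) :
    Ideal.ramificationIdx' (Ideal.span {(p : ℤ)}) v.asIdeal = 1 := by
  refine Ideal.ramificationIdx'_spec ?_ ?_
  · rw [Ideal.map_span, Set.image_singleton, pow_one, Ideal.span_le,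
      Set.singleton_subset_iff]
    simpa using hpv
  · rw [Ideal.map_span, Set.image_singleton]
    intro hle
    refine hnot2 ?_
    have h2 : algebraMap ℤ (𝓞 K) (p : ℤ) ∈ v.asIdeal ^ (1 + 1) :=
      hle (Ideal.subset_span rfl)
    simpa using h2

set_option synthInstance.maxHeartbeats 1000000 in
set_option maxHeartbeats 1000000 in
include hp hpv in
lemma inertia_eq_one (γ : K) (hγ : IntermediateField.adjoin ℚ {γ} = ⊤)
    (H : ∀ n : ℕ, ∃ U : ℚ, ¬ p ∣ U.den ∧
      v.valuation K (algebraMap ℚ K U + γ) <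
        ((ofAdd (-(n : ℤ)) : Multiplicative ℤ) : WithZero (Multiplicative ℤ))) :
    Ideal.inertiaDeg' (Ideal.span {(p : ℤ)}) v.asIdeal = 1 := by
  have hcom := comap_eq hp v hpv
  rw [Ideal.inertiaDeg', dif_pos hcom]
  haveI hmax : (Ideal.span {(p : ℤ)}).IsMaximal := by
    refine PrincipalIdealRing.isMaximal_of_irreducible ?_
    exact (Int.prime_iff_natAbs_prime.mpr (by simpa using hp)).irreducible
  letI : Field (ℤ ⧸ Ideal.span {(p : ℤ)}) := Ideal.Quotient.field _
  haveI : Nontrivial (𝓞 K ⧸ v.asIdeal) := Ideal.Quotient.nontrivial_iff.mpr v.isPrime.ne_top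
  letI alg : Algebra (ℤ ⧸ Ideal.span {(p : ℤ)}) (𝓞 K ⧸ v.asIdeal) :=
    Ideal.Quotient.algebraQuotientOfLEComap (le_of_eq hcom.symm)
  have hbij : Function.Bijective (algebraMap (ℤ ⧸ Ideal.span {(p : ℤ)}) (𝓞 K ⧸ v.asIdeal)) := by
    constructor
    · exact RingHom.injective _
    · intro y
      obtain ⟨x, rfl⟩ := Ideal.Quotient.mk_surjective y
      obtain ⟨m, hm⟩ := exists_int_congr hp v hpv γ hγ H x
      refine ⟨Ideal.Quotient.mk _ (m : ℤ), ?_⟩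
      have h1 : algebraMap (ℤ ⧸ Ideal.span {(p : ℤ)}) (𝓞 K ⧸ v.asIdeal)
          (Ideal.Quotient.mk _ (m : ℤ)) = Ideal.Quotient.mk v.asIdeal ((m : ℤ) : 𝓞 K) := by
        have h2 : algebraMap (ℤ ⧸ Ideal.span {(p : ℤ)}) (𝓞 K ⧸ v.asIdeal)
            (Ideal.Quotient.mk _ (m : ℤ)) = Ideal.Quotient.mk v.asIdeal (algebraMap ℤ (𝓞 K) m) :=
          Ideal.quotientMap_mk (H := le_of_eq hcom.symm)
        rw [h2]
        norm_cast
      rw [h1, Ideal.Quotient.mk_eq_mk_iff_sub_mem]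
      simpa using (neg_mem hm)
  have hfr := (LinearEquiv.ofBijective
    (Algebra.linearMap (ℤ ⧸ Ideal.span {(p : ℤ)}) (𝓞 K ⧸ v.asIdeal)) hbij).finrank_eq
  rw [← hfr]
  exact Module.finrank_self _

end Fixedv

end BVRI

/-- Let `K = ℚ(γ)` be a number field and `p` a rational prime. Then there is a bound
`B` such that for every `U ∈ ℤ_(p)` and every prime `𝔭` of `𝓞 K` above `p` with
`e(𝔭|p) ≠ 1` or `f(𝔭|p) ≠ 1`, we have `ord_𝔭(U + γ) ≤ B` (stated multiplicatively:
the valuation of `U + γ` is at least `ofAdd (-B)`). -/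
theorem bounded_valuation_ramified_or_inert (K : Type*) [Field K] [NumberField K]
    (p : ℕ) (hp : p.Prime) (γ : K) (hγ : IntermediateField.adjoin ℚ {γ} = ⊤) :
    ∃ B : ℤ, ∀ U : ℚ, ¬ p ∣ U.den →
      ∀ v : HeightOneSpectrum (𝓞 K), (p : 𝓞 K) ∈ v.asIdeal →
        (Ideal.ramificationIdx' (Ideal.span {(p : ℤ)}) v.asIdeal ≠ 1 ∨
          Ideal.inertiaDeg' (Ideal.span {(p : ℤ)}) v.asIdeal ≠ 1) →
        ((Multiplicative.ofAdd (-B) : Multiplicative ℤ) : WithZero (Multiplicative ℤ)) ≤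
          v.valuation K (algebraMap ℚ K U + γ) := by
  classical
  have hp0 : (Ideal.span {(p : 𝓞 K)} : Ideal (𝓞 K)) ≠ 0 := by
    rw [Ne, Ideal.zero_eq_bot, Ideal.span_singleton_eq_bot]
    exact_mod_cast hp.ne_zero
  have hfin : {v : HeightOneSpectrum (𝓞 K) | (p : 𝓞 K) ∈ v.asIdeal}.Finite := by
    refine (Ideal.finite_factors hp0).subset ?_
    intro v hv
    exact Ideal.dvd_span_singleton.mpr hv
  set T := hfin.toFinset with hT
  let g : HeightOneSpectrum (𝓞 K) → ℤ := fun v =>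
    if h : ∃ B : ℤ, ∀ U : ℚ, ¬ p ∣ U.den →
        ((Multiplicative.ofAdd (-B) : Multiplicative ℤ) : WithZero (Multiplicative ℤ)) ≤
          v.valuation K (algebraMap ℚ K U + γ) then h.choose else 0
  refine ⟨((T.sup fun v => (g v).toNat : ℕ) : ℤ), ?_⟩
  intro U hU v hpv hbad
  have hvT : v ∈ T := hfin.mem_toFinset.mpr hpv
  by_cases hgood : ∃ B : ℤ, ∀ U : ℚ, ¬ p ∣ U.den →
      ((Multiplicative.ofAdd (-B) : Multiplicative ℤ) : WithZero (Multiplicative ℤ)) ≤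
        v.valuation K (algebraMap ℚ K U + γ)
  · have hspec := hgood.choose_spec U hU
    refine le_trans ?_ hspec
    rw [WithZero.coe_le_coe, ofAdd_le, neg_le_neg_iff]
    have h1 : g v = hgood.choose := dif_pos hgood
    calc hgood.choose = g v := h1.symm
      _ ≤ ((g v).toNat : ℤ) := Int.self_le_toNat _
      _ ≤ _ := by exact_mod_cast Finset.le_sup (f := fun v => (g v).toNat) hvT
  · exfalso
    push_neg at hgood
    have H : ∀ n : ℕ, ∃ U : ℚ, ¬ p ∣ U.den ∧
        v.valuation K (algebraMap ℚ K U + γ) <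
          ((Multiplicative.ofAdd (-(n : ℤ)) : Multiplicative ℤ) : WithZero (Multiplicative ℤ)) := by
      intro n
      obtain ⟨U', hU1, hU2⟩ := hgood (n : ℤ)
      exact ⟨U', hU1, hU2⟩
    rcases hbad with hbad | hbad
    · exact hbad (BVRI.ram_eq_one hp v hpv (BVRI.p_not_mem_sq hp v hpv γ hγ H))
    · exact hbad (BVRI.inertia_eq_one hp v hpv γ hγ H)
end

section
/- Let L be a number field of degree D, 𝔖 a finite set of finite places of L, and ε an 𝔖-unit (i.e. ε ∈ O_𝔖^×). Let η ∈ M_L be a place of L chosen so that ‖ε‖_η is minimal among all places. Then ‖ε‖_η ≤ 1 and h(ε) ≤ ((#M_L^∞ + #𝔖)/D) · log(‖ε^{-1}‖_η). -/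
open NumberField IsDedekindDomain

/-- The normalized absolute value `‖x‖_ν = |x|_ν^{D_ν}` of `x` at a place `ν` of the
number field `L`: at an infinite place `w` it is `w(x)^{mult w}`, and at a finite
place `v` (a height-one prime of `𝓞 L`) it is `Norm(𝔭)^{-ord_v x}` (and `0` at `x = 0`). -/
noncomputable def placeNorm (L : Type*) [Field L] [NumberField L] :
    (InfinitePlace L ⊕ HeightOneSpectrum (𝓞 L)) → L → ℝ
  | Sum.inl w => fun x => (w x) ^ w.mult
  | Sum.inr v => fun x =>
      if hx : v.valuation L x = 0 then 0
      else (Ideal.absNorm v.asIdeal : ℝ) ^ (Multiplicative.toAdd (WithZero.unzero hx))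

/-- The absolute logarithmic height
`h(x) = (1/[L:ℚ]) ∑_ν log max {1, ‖x‖_ν}`, summing over all places of `L`. -/
noncomputable def absLogHeight (L : Type*) [Field L] [NumberField L] (x : L) : ℝ :=
  (Module.finrank ℚ L : ℝ)⁻¹ *
    ∑ᶠ ν : InfinitePlace L ⊕ HeightOneSpectrum (𝓞 L),
      Real.log (max 1 (placeNorm L ν x))

lemma placeNorm_inr (L : Type*) [Field L] [NumberField L] (v : HeightOneSpectrum (𝓞 L)) (x : L) :
    placeNorm L (Sum.inr v) x =
      if hx : v.valuation L x = 0 then 0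
      else (Ideal.absNorm v.asIdeal : ℝ) ^ (Multiplicative.toAdd (WithZero.unzero hx)) := rfl

lemma toAdd_unzero_eq {x : WithZero (Multiplicative ℤ)} {a : ℤ} (hx : x ≠ 0)
    (h : x = ((Multiplicative.ofAdd a : Multiplicative ℤ) : WithZero (Multiplicative ℤ))) :
    Multiplicative.toAdd (WithZero.unzero hx) = a := by
  subst h
  rw [WithZero.unzero_coe]
  rfl

lemma placeNorm_inr_eq (L : Type*) [Field L] [NumberField L] (v : HeightOneSpectrum (𝓞 L))
    {x : L} {a : ℤ}
    (h : v.valuation L x = ((Multiplicative.ofAdd a : Multiplicative ℤ) : WithZero (Multiplicative ℤ))) :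
    placeNorm L (Sum.inr v) x = (Ideal.absNorm v.asIdeal : ℝ) ^ a := by
  have hx : v.valuation L x ≠ 0 := by rw [h]; exact WithZero.coe_ne_zero
  rw [placeNorm_inr, dif_neg hx, toAdd_unzero_eq hx h]

open scoped Classical in
lemma finprod_pow_count (L : Type*) [Field L] [NumberField L] {m : 𝓞 L} (hm : m ≠ 0) :
    (∏ᶠ v : HeightOneSpectrum (𝓞 L),
      (Ideal.absNorm v.asIdeal : ℝ) ^
        ((Associates.mk v.asIdeal).count (Associates.mk (Ideal.span {m})).factors)) =
      (Ideal.absNorm (Ideal.span {m} : Ideal (𝓞 L)) : ℝ) := by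
  have hI : (Ideal.span {m} : Ideal (𝓞 L)) ≠ 0 := by
    simpa [Ideal.zero_eq_bot, Ideal.span_singleton_eq_bot] using hm
  set F : Ideal (𝓞 L) →* ℝ :=
    (Nat.castRingHom ℝ).toMonoidHom.comp Ideal.absNorm.toMonoidHom with hF
  have hmap := F.map_finprod
    (f := fun v : HeightOneSpectrum (𝓞 L) => v.maxPowDividing (Ideal.span {m}))
    (Ideal.finite_mulSupport hI)
  rw [Ideal.finprod_heightOneSpectrum_factorization hI] at hmap
  have h0 : (Ideal.absNorm (Ideal.span {m} : Ideal (𝓞 L)) : ℝ) = F (Ideal.span {m}) := rfl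
  rw [h0, hmap]
  refine finprod_congr fun v => ?_
  show _ = F (v.asIdeal ^ _)
  rw [map_pow]
  rfl

open scoped Classical in
lemma mulSupport_pow_count_finite (L : Type*) [Field L] [NumberField L] {m : 𝓞 L} (hm : m ≠ 0) :
    (Function.mulSupport fun v : HeightOneSpectrum (𝓞 L) =>
      (Ideal.absNorm v.asIdeal : ℝ) ^
        (((Associates.mk v.asIdeal).count (Associates.mk (Ideal.span {m})).factors : ℤ))).Finite := by
  have hI : (Ideal.span {m} : Ideal (𝓞 L)) ≠ 0 := by
    simpa [Ideal.zero_eq_bot, Ideal.span_singleton_eq_bot] using hm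
  refine Set.Finite.subset (Filter.eventually_cofinite.mp (Associates.finite_factors hI)) ?_
  intro v hv
  simp only [Function.mem_mulSupport] at hv
  intro h0
  exact hv (by rw [h0, zpow_zero])

open scoped Classical in
lemma finprod_placeNorm_inr (L : Type*) [Field L] [NumberField L] {ε : L} (hε : ε ≠ 0) :
    (∏ᶠ v : HeightOneSpectrum (𝓞 L), placeNorm L (Sum.inr v) ε)
      = |(Algebra.norm ℚ ε : ℝ)|⁻¹ := by
  obtain ⟨⟨n, d⟩, h⟩ := IsLocalization.mk'_surjective (nonZeroDivisors (𝓞 L)) ε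
  dsimp only at h
  have hd : (d : 𝓞 L) ≠ 0 := nonZeroDivisors.coe_ne_zero d
  have hn : n ≠ 0 := by
    rintro rfl
    rw [IsLocalization.mk'_zero] at h
    exact hε h.symm
  set cn : HeightOneSpectrum (𝓞 L) → ℕ := fun v =>
    (Associates.mk v.asIdeal).count (Associates.mk (Ideal.span {n})).factors with hcn
  set cd : HeightOneSpectrum (𝓞 L) → ℕ := fun v =>
    (Associates.mk v.asIdeal).count (Associates.mk (Ideal.span {(d : 𝓞 L)})).factors with hcd
  have key : ∀ v : HeightOneSpectrum (𝓞 L),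
      placeNorm L (Sum.inr v) ε = (Ideal.absNorm v.asIdeal : ℝ) ^ ((cd v : ℤ) - (cn v : ℤ)) := by
    intro v
    refine placeNorm_inr_eq L v ?_
    rw [← h, IsDedekindDomain.HeightOneSpectrum.valuation_of_mk']
    show v.intValuationDef n / v.intValuationDef (d : 𝓞 L) = _
    rw [v.intValuationDef_if_neg hn, v.intValuationDef_if_neg hd, WithZero.exp, WithZero.exp,
      ← WithZero.coe_div]
    congr 1
    rw [← ofAdd_sub]
    congr 1
    ring
  have hNe : ∀ v : HeightOneSpectrum (𝓞 L), (Ideal.absNorm v.asIdeal : ℝ) ≠ 0 := by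
    intro v
    simp only [ne_eq, Nat.cast_eq_zero, Ideal.absNorm_eq_zero_iff]
    exact v.ne_bot
  calc (∏ᶠ v : HeightOneSpectrum (𝓞 L), placeNorm L (Sum.inr v) ε)
      = ∏ᶠ v : HeightOneSpectrum (𝓞 L),
          ((Ideal.absNorm v.asIdeal : ℝ) ^ ((cd v : ℤ)) /
            (Ideal.absNorm v.asIdeal : ℝ) ^ ((cn v : ℤ))) := by
        refine finprod_congr fun v => ?_
        rw [key v, zpow_sub₀ (hNe v)]
    _ = (∏ᶠ v : HeightOneSpectrum (𝓞 L), (Ideal.absNorm v.asIdeal : ℝ) ^ ((cd v : ℤ))) /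
          ∏ᶠ v : HeightOneSpectrum (𝓞 L), (Ideal.absNorm v.asIdeal : ℝ) ^ ((cn v : ℤ)) :=
        finprod_div_distrib (mulSupport_pow_count_finite L hd) (mulSupport_pow_count_finite L hn)
    _ = (Ideal.absNorm (Ideal.span {(d : 𝓞 L)} : Ideal (𝓞 L)) : ℝ) /
          (Ideal.absNorm (Ideal.span {n} : Ideal (𝓞 L)) : ℝ) := by
        rw [← finprod_pow_count L hd, ← finprod_pow_count L hn]
        congr 1 <;> exact finprod_congr fun v => (zpow_natCast _ _)
    _ = |(Algebra.norm ℚ ((d : 𝓞 L) : L) : ℝ)| / |(Algebra.norm ℚ ((n : 𝓞 L) : L) : ℝ)| := by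
        rw [Ideal.absNorm_span_singleton, Ideal.absNorm_span_singleton]
        rw [Nat.cast_natAbs, Nat.cast_natAbs, ← Algebra.coe_norm_int, ← Algebra.coe_norm_int]
        norm_cast
    _ = |(Algebra.norm ℚ ε : ℝ)|⁻¹ := by
        have hspec : ε * algebraMap (𝓞 L) L d = algebraMap (𝓞 L) L n := by
          rw [← h]; exact IsLocalization.mk'_spec L n d
        have hnorm : (Algebra.norm ℚ ε : ℝ) * (Algebra.norm ℚ (algebraMap (𝓞 L) L d) : ℝ)
            = (Algebra.norm ℚ (algebraMap (𝓞 L) L n) : ℝ) := by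
          rw [← Rat.cast_mul, ← map_mul, hspec]
        have hdL : algebraMap (𝓞 L) L d ≠ 0 := by
          simpa using hd
        have hdn : (Algebra.norm ℚ (algebraMap (𝓞 L) L d) : ℝ) ≠ 0 := by
          rw [ne_eq, Rat.cast_eq_zero, Algebra.norm_eq_zero_iff]
          exact hdL
        have hεn : (Algebra.norm ℚ ε : ℝ) ≠ 0 := by
          rw [ne_eq, Rat.cast_eq_zero, Algebra.norm_eq_zero_iff]
          exact hε
        have h1 : |(Algebra.norm ℚ ε : ℝ)| ≠ 0 := abs_ne_zero.mpr hεn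
        have h2 : |(Algebra.norm ℚ (algebraMap (𝓞 L) L d) : ℝ)| ≠ 0 := abs_ne_zero.mpr hdn
        rw [show ((d : 𝓞 L) : L) = algebraMap (𝓞 L) L d from rfl,
          show ((n : 𝓞 L) : L) = algebraMap (𝓞 L) L n from rfl, ← hnorm, abs_mul]
        field_simp

lemma placeNorm_inl' (L : Type*) [Field L] [NumberField L] (w : InfinitePlace L) (x : L) :
    placeNorm L (Sum.inl w) x = (w x) ^ w.mult := rfl

lemma placeNorm_pos (L : Type*) [Field L] [NumberField L] {ε : L} (hε : ε ≠ 0)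
    (ν : InfinitePlace L ⊕ HeightOneSpectrum (𝓞 L)) : 0 < placeNorm L ν ε := by
  cases ν with
  | inl w =>
    rw [placeNorm_inl']
    exact pow_pos (NumberField.InfinitePlace.pos_iff.mpr hε) _
  | inr v =>
    have hx : v.valuation L ε ≠ 0 := (Valuation.ne_zero_iff _).mpr hε
    rw [placeNorm_inr, dif_neg hx]
    refine zpow_pos ?_ _
    have : Ideal.absNorm v.asIdeal ≠ 0 := by
      simp only [ne_eq, Ideal.absNorm_eq_zero_iff]
      exact v.ne_bot
    positivity

lemma placeNorm_inv (L : Type*) [Field L] [NumberField L] {ε : L} (hε : ε ≠ 0)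
    (ν : InfinitePlace L ⊕ HeightOneSpectrum (𝓞 L)) :
    placeNorm L ν ε⁻¹ = (placeNorm L ν ε)⁻¹ := by
  cases ν with
  | inl w =>
    rw [placeNorm_inl', placeNorm_inl', map_inv₀, inv_pow]
  | inr v =>
    have hx : v.valuation L ε ≠ 0 := (Valuation.ne_zero_iff _).mpr hε
    set a : ℤ := Multiplicative.toAdd (WithZero.unzero hx) with ha
    have hval : v.valuation L ε
        = ((Multiplicative.ofAdd a : Multiplicative ℤ) : WithZero (Multiplicative ℤ)) := by
      rw [ha]
      rw [show (Multiplicative.ofAdd (Multiplicative.toAdd (WithZero.unzero hx))) =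
        WithZero.unzero hx from rfl, WithZero.coe_unzero]
    have hval' : v.valuation L ε⁻¹
        = ((Multiplicative.ofAdd (-a) : Multiplicative ℤ) : WithZero (Multiplicative ℤ)) := by
      rw [map_inv₀, hval, ← WithZero.coe_inv, ← ofAdd_neg]
    rw [placeNorm_inr_eq L v hval', placeNorm_inr_eq L v hval, zpow_neg]

/-- Let `𝔖` be a finite set of finite places of `L` and `ε` an `𝔖`-unit. If `η` is a
place of `L` at which `‖ε‖_η` is minimal among all places, then `‖ε‖_η ≤ 1` and
`h(ε) ≤ ((#M_L^∞ + #𝔖)/D) · log ‖ε⁻¹‖_η`. -/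
theorem height_le_of_minimal_place (L : Type*) [Field L] [NumberField L]
    (𝔖 : Finset (HeightOneSpectrum (𝓞 L))) (ε : L) (hε : ε ≠ 0)
    (hSunit : ∀ v : HeightOneSpectrum (𝓞 L), v ∉ 𝔖 → v.valuation L ε = 1)
    (η : InfinitePlace L ⊕ HeightOneSpectrum (𝓞 L))
    (hη : ∀ ν : InfinitePlace L ⊕ HeightOneSpectrum (𝓞 L),
      placeNorm L η ε ≤ placeNorm L ν ε) :
    placeNorm L η ε ≤ 1 ∧
      absLogHeight L ε ≤
        ((Fintype.card (InfinitePlace L) + 𝔖.card : ℝ) / (Module.finrank ℚ L)) *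
          Real.log (placeNorm L η ε⁻¹) := by
  classical
  set S : Finset (InfinitePlace L ⊕ HeightOneSpectrum (𝓞 L)) :=
    Finset.univ.image Sum.inl ∪ 𝔖.image Sum.inr with hSdef
  -- places outside S have norm 1
  have houtside : ∀ ν : InfinitePlace L ⊕ HeightOneSpectrum (𝓞 L),
      ν ∉ S → placeNorm L ν ε = 1 := by
    rintro (w | v) hν
    · exact absurd (by simp [hSdef]) hν
    · have hv𝔖 : v ∉ 𝔖 := by
        intro hmem
        exact hν (by simp [hSdef, hmem])
      have hval : v.valuation L ε
          = ((Multiplicative.ofAdd (0 : ℤ) : Multiplicative ℤ) : WithZero (Multiplicative ℤ)) := by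
        rw [hSunit v hv𝔖]; rfl
      rw [placeNorm_inr_eq L v hval, zpow_zero]
  -- the product formula over S
  have hprod : ∏ ν ∈ S, placeNorm L ν ε = 1 := by
    have hdisj : Disjoint (Finset.univ.image (Sum.inl : InfinitePlace L → _))
        (𝔖.image Sum.inr) := by
      simp [Finset.disjoint_left]
    rw [hSdef, Finset.prod_union hdisj,
      Finset.prod_image (fun a _ b _ h => Sum.inl_injective h),
      Finset.prod_image (fun a _ b _ h => Sum.inr_injective h)]
    have h1 : ∏ w : InfinitePlace L, placeNorm L (Sum.inl w) ε
        = |(Algebra.norm ℚ ε : ℝ)| := by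
      rw [show (fun w : InfinitePlace L => placeNorm L (Sum.inl w) ε)
        = fun w => (w ε) ^ w.mult from rfl]
      exact_mod_cast NumberField.InfinitePlace.prod_eq_abs_norm ε
    have h2 : ∏ v ∈ 𝔖, placeNorm L (Sum.inr v) ε = |(Algebra.norm ℚ ε : ℝ)|⁻¹ := by
      rw [← finprod_placeNorm_inr L hε]
      refine (finprod_eq_prod_of_mulSupport_subset _ ?_).symm
      intro v hv
      simp only [Function.mem_mulSupport] at hv
      by_contra hv𝔖
      refine hv ?_
      have hval : v.valuation L ε
          = ((Multiplicative.ofAdd (0 : ℤ) : Multiplicative ℤ) : WithZero (Multiplicative ℤ)) := by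
        rw [hSunit v (by simpa using hv𝔖)]; rfl
      rw [placeNorm_inr_eq L v hval, zpow_zero]
    have hne : |(Algebra.norm ℚ ε : ℝ)| ≠ 0 := by
      rw [abs_ne_zero, ne_eq, Rat.cast_eq_zero, Algebra.norm_eq_zero_iff]
      exact hε
    rw [h1, h2, mul_inv_cancel₀ hne]
  -- part 1
  have hη1 : placeNorm L η ε ≤ 1 := by
    by_contra hlt
    push_neg at hlt
    have hSne : S.Nonempty := by
      obtain ⟨w⟩ := (inferInstance : Nonempty (InfinitePlace L))
      exact ⟨Sum.inl w, by simp [hSdef]⟩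
    have hle : placeNorm L η ε ^ S.card ≤ ∏ ν ∈ S, placeNorm L ν ε := by
      rw [← Finset.prod_const]
      exact Finset.prod_le_prod (fun ν _ => le_of_lt (lt_trans one_pos hlt))
        (fun ν _ => hη ν)
    rw [hprod] at hle
    exact absurd hle (not_le.mpr (one_lt_pow₀ hlt (Finset.card_ne_zero_of_mem hSne.choose_spec)))
  refine ⟨hη1, ?_⟩
  -- part 2
  set B : ℝ := Real.log (placeNorm L η ε⁻¹) with hB
  have hBeq : B = -Real.log (placeNorm L η ε) := by
    rw [hB, placeNorm_inv L hε, Real.log_inv]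
  have hB0 : 0 ≤ B := by
    rw [hBeq, neg_nonneg]
    exact Real.log_nonpos (le_of_lt (placeNorm_pos L hε η)) hη1
  have hbound : ∀ ν ∈ S, Real.log (max 1 (placeNorm L ν ε))
      ≤ B + Real.log (placeNorm L ν ε) := by
    intro ν _
    rcases le_total (placeNorm L ν ε) 1 with hle | hle
    · rw [max_eq_left hle, Real.log_one]
      have h1 : Real.log (placeNorm L η ε) ≤ Real.log (placeNorm L ν ε) :=
        Real.log_le_log (placeNorm_pos L hε η) (hη ν)
      rw [hBeq]
      linarith
    · rw [max_eq_right hle]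
      linarith
  have hlogsum : ∑ ν ∈ S, Real.log (placeNorm L ν ε) = 0 := by
    rw [← Real.log_prod (fun ν _ => (placeNorm_pos L hε ν).ne'), hprod, Real.log_one]
  have hheight : absLogHeight L ε
      = (Module.finrank ℚ L : ℝ)⁻¹ * ∑ ν ∈ S, Real.log (max 1 (placeNorm L ν ε)) := by
    rw [absLogHeight]
    congr 1
    refine finsum_eq_sum_of_support_subset _ ?_
    intro ν hν
    simp only [Function.mem_support] at hν
    by_contra hνS
    exact hν (by rw [houtside ν hνS, max_self, Real.log_one])
  have hsum_le : ∑ ν ∈ S, Real.log (max 1 (placeNorm L ν ε)) ≤ S.card * B := by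
    calc ∑ ν ∈ S, Real.log (max 1 (placeNorm L ν ε))
        ≤ ∑ ν ∈ S, (B + Real.log (placeNorm L ν ε)) := Finset.sum_le_sum hbound
      _ = S.card * B := by rw [Finset.sum_add_distrib, hlogsum, Finset.sum_const,
          nsmul_eq_mul, add_zero]
  have hcard : (S.card : ℝ) ≤ (Fintype.card (InfinitePlace L) + 𝔖.card : ℝ) := by
    have hc : S.card ≤ Fintype.card (InfinitePlace L) + 𝔖.card := by
      rw [hSdef]
      refine le_trans (Finset.card_union_le _ _)
        (add_le_add (le_trans Finset.card_image_le (by simp)) Finset.card_image_le)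
    exact_mod_cast hc
  have hDpos : (0 : ℝ) < Module.finrank ℚ L := by
    exact_mod_cast Module.finrank_pos
  rw [hheight]
  calc (Module.finrank ℚ L : ℝ)⁻¹ * ∑ ν ∈ S, Real.log (max 1 (placeNorm L ν ε))
      ≤ (Module.finrank ℚ L : ℝ)⁻¹ * (S.card * B) := by
        exact mul_le_mul_of_nonneg_left hsum_le (by positivity)
    _ ≤ (Module.finrank ℚ L : ℝ)⁻¹ * ((Fintype.card (InfinitePlace L) + 𝔖.card : ℝ) * B) := by
        exact mul_le_mul_of_nonneg_left (mul_le_mul_of_nonneg_right hcard hB0) (by positivity)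
    _ = ((Fintype.card (InfinitePlace L) + 𝔖.card : ℝ) / (Module.finrank ℚ L)) * B := by
        field_simp
end
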